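/- Let f : ℝⁿ → ℝ satisfy ‖∇²f(x)‖ ≤ L₀ + L₁‖∇f(x)‖ for all x (the (L₀,L₁)-smoothness condition), and let γ := ‖g‖ / ((L₀ + L₁‖∇f(x)‖)·(1 + exp(‖g‖/‖∇f(x)‖))) for a given vector g ≠ 0 and point x with ∇f(x) ≠ 0. Then for all h with ‖h‖ ≤ γ, ‖∇f(x+h) − ∇f(x) − ∇²f(x)h‖ ≤ ‖g‖·‖h‖/γ. -/

import Mathlib

open scoped RealInnerProductSpace
open Set

set_option maxHeartbeats 1000000 in
theorem L0L1_smooth_gradient_normalized_smoothness {n : ℕ}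
    (f : EuclideanSpace ℝ (Fin n) → ℝ) (hf : ContDiff ℝ 2 f)
    (L₀ L₁ : ℝ) (hL₀ : 0 < L₀) (hL₁ : 0 < L₁)
    (hsmooth : ∀ x : EuclideanSpace ℝ (Fin n),
      ‖fderiv ℝ (gradient f) x‖ ≤ L₀ + L₁ * ‖gradient f x‖)
    (x g : EuclideanSpace ℝ (Fin n)) (hg : g ≠ 0) (hgx : gradient f x ≠ 0)
    (γ : ℝ)
    (hγ : γ = ‖g‖ / ((L₀ + L₁ * ‖gradient f x‖) *
        (1 + Real.exp (‖g‖ / ‖gradient f x‖)))) :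
    ∀ h : EuclideanSpace ℝ (Fin n), ‖h‖ ≤ γ →
      ‖gradient f (x + h) - gradient f x - fderiv ℝ (gradient f) x h‖
        ≤ ‖g‖ * ‖h‖ / γ := by
  intro h hh
  set G := gradient f with hGdef
  have hG1 : ContDiff ℝ 1 G := by
    have h2 : ContDiff ℝ 1 (fderiv ℝ f) := hf.fderiv_right (by norm_num)
    exact (InnerProductSpace.toDual ℝ
      (EuclideanSpace ℝ (Fin n))).symm.contDiff.comp h2
  have hGd : Differentiable ℝ G := hG1.differentiable one_ne_zero
  set A := L₀ + L₁ * ‖G x‖ with hA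
  have hgpos : 0 < ‖g‖ := norm_pos_iff.mpr hg
  have hGxpos : 0 < ‖G x‖ := norm_pos_iff.mpr hgx
  have hApos : 0 < A := by positivity
  set s := ‖g‖ / ‖G x‖ with hs
  have hspos : 0 < s := div_pos hgpos hGxpos
  have hden : 0 < A * (1 + Real.exp s) := by positivity
  have hγpos : 0 < γ := by rw [hγ]; exact div_pos hgpos hden
  have hgγ : ‖g‖ / γ = A * (1 + Real.exp s) := by
    rw [hγ]; field_simp
  rcases eq_or_ne h 0 with rfl | hh0
  · simp
  have hhpos : 0 < ‖h‖ := norm_pos_iff.mpr hh0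
  have hKs : L₁ * ‖h‖ ≤ s := by
    have h1 : L₁ * ‖G x‖ ≤ A * (1 + Real.exp s) := by
      nlinarith [Real.exp_pos s, hApos]
    have h2 : L₁ * γ ≤ s := by
      rw [hγ, hs, mul_div_assoc', div_le_div_iff₀ hden hGxpos]
      nlinarith [mul_le_mul_of_nonneg_left h1 hgpos.le]
    nlinarith
  -- derivative of φ t = G (x + t • h)
  have hφderiv : ∀ t : ℝ, HasDerivAt (fun t : ℝ => G (x + t • h))
      ((fderiv ℝ G (x + t • h)) h) t := by
    intro t
    have h1 : HasDerivAt (fun t : ℝ => x + t • h) h t := by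
      simpa using ((hasDerivAt_id t).smul_const h).const_add x
    exact (hGd (x + t • h)).hasFDerivAt.comp_hasDerivAt t h1
  -- Grönwall
  have key : ∀ t ∈ Icc (0:ℝ) 1, ‖G (x + t • h)‖ ≤
      gronwallBound ‖G x‖ (L₁ * ‖h‖) (L₀ * ‖h‖) (t - 0) := by
    apply norm_le_gronwallBound_of_norm_deriv_right_le
    · exact (hG1.continuous.comp (continuous_const.add (continuous_id.smul continuous_const))).continuousOn
    · exact fun t _ => (hφderiv t).hasDerivWithinAt
    · simp
    · intro t _
      calc ‖(fderiv ℝ G (x + t • h)) h‖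
          ≤ ‖fderiv ℝ G (x + t • h)‖ * ‖h‖ := ContinuousLinearMap.le_opNorm _ _
        _ ≤ (L₀ + L₁ * ‖G (x + t • h)‖) * ‖h‖ :=
            mul_le_mul_of_nonneg_right (hsmooth _) (norm_nonneg h)
        _ = L₁ * ‖h‖ * ‖G (x + t • h)‖ + L₀ * ‖h‖ := by ring
  -- Hessian bound along the segment
  have hHy : ∀ t ∈ Icc (0:ℝ) 1, ‖fderiv ℝ G (x + t • h)‖ ≤ A * Real.exp s := by
    intro t ht
    have hKne : L₁ * ‖h‖ ≠ 0 := by positivity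
    have hb := key t ht
    rw [gronwallBound_of_K_ne_0 hKne] at hb
    have heq : L₀ + L₁ * (‖G x‖ * Real.exp (L₁ * ‖h‖ * t)
        + L₀ * ‖h‖ / (L₁ * ‖h‖) * (Real.exp (L₁ * ‖h‖ * t) - 1))
        = A * Real.exp (L₁ * ‖h‖ * t) := by
      rw [hA]; field_simp; ring
    have hexp : Real.exp (L₁ * ‖h‖ * t) ≤ Real.exp s := by
      apply Real.exp_le_exp.mpr
      nlinarith [ht.1, ht.2, hhpos, hL₁]
    calc ‖fderiv ℝ G (x + t • h)‖ ≤ L₀ + L₁ * ‖G (x + t • h)‖ := hsmooth _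
      _ ≤ A * Real.exp (L₁ * ‖h‖ * t) := by
          simp only [sub_zero] at hb
          have h3 : L₁ * ‖G (x + t • h)‖ ≤ L₁ * (‖G x‖ * Real.exp (L₁ * ‖h‖ * t)
              + L₀ * ‖h‖ / (L₁ * ‖h‖) * (Real.exp (L₁ * ‖h‖ * t) - 1)) :=
            mul_le_mul_of_nonneg_left hb hL₁.le
          exact le_of_le_of_eq (add_le_add_right h3 L₀) heq
      _ ≤ A * Real.exp s := by nlinarith
  -- Mean value inequality on the segment
  set H0 := fderiv ℝ G x with hH0
  have hseg : ∀ y ∈ segment ℝ x (x + h), ∃ t ∈ Icc (0:ℝ) 1, y = x + t • h := by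
    intro y hy
    rw [segment_eq_image'] at hy
    obtain ⟨t, ht, hty⟩ := hy
    exact ⟨t, ht, by rw [← hty]; simp⟩
  have hC : ∀ y ∈ segment ℝ x (x + h),
      ‖fderiv ℝ G y - H0‖ ≤ A * (1 + Real.exp s) := by
    intro y hy
    obtain ⟨t, ht, rfl⟩ := hseg y hy
    have h1 := hHy t ht
    have h2 : ‖H0‖ ≤ A := hsmooth x
    calc ‖fderiv ℝ G (x + t • h) - H0‖ ≤ ‖fderiv ℝ G (x + t • h)‖ + ‖H0‖ :=
          norm_sub_le _ _
      _ ≤ A * (1 + Real.exp s) := by nlinarith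
  have hmvt := (convex_segment x (x + h)).norm_image_sub_le_of_norm_hasFDerivWithin_le
    (f := fun y => G y - H0 y) (f' := fun y => fderiv ℝ G y - H0)
    (fun y _ => (((hGd y).hasFDerivAt).sub H0.hasFDerivAt).hasFDerivWithinAt)
    hC (left_mem_segment ℝ x (x + h)) (right_mem_segment ℝ x (x + h))
  have hsimp : (G (x + h) - H0 (x + h)) - (G x - H0 x)
      = G (x + h) - G x - H0 h := by
    have : H0 (x + h) = H0 x + H0 h := map_add H0 x h
    rw [this]; abel
  rw [hsimp] at hmvt
  have hnorm : ‖x + h - x‖ = ‖h‖ := by rw [add_sub_cancel_left]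
  rw [hnorm] at hmvt
  have hrhs : ‖g‖ * ‖h‖ / γ = A * (1 + Real.exp s) * ‖h‖ := by
    rw [← hgγ]; ring
  rw [hrhs]
  exact hmvt
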